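/- (Bogolyubov inequality.) Let n ∈ ℕ, T > 0, and let H₁, H₂ : ℝⁿ → ℝ be measurable functions such that Q_i := ∫_{ℝⁿ} e^{−H_i(Λ)/T} dΛ < ∞ for i = 1,2, and such that H₁ − H₂ is integrable with respect to each Gibbs measure Q_i^{-1} e^{−H_i/T} dΛ. Denote ⟨F⟩_i = Q_i^{-1} ∫ F(Λ) e^{−H_i(Λ)/T} dΛ. Then ⟨H₁ − H₂⟩₁ ≤ T·log Q₂ − T·log Q₁ ≤ ⟨H₁ − H₂⟩₂. -/

import Mathlib

open MeasureTheory Set Filter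
open scoped Topology ENNReal

noncomputable section

/-- Jensen's inequality for `exp`. -/
lemma my_exp_integral_le {α : Type*} [MeasurableSpace α] (μ : Measure α)
    [IsProbabilityMeasure μ] {g : α → ℝ} (hg : Integrable g μ)
    (heg : Integrable (fun x => Real.exp (g x)) μ) :
    Real.exp (∫ x, g x ∂μ) ≤ ∫ x, Real.exp (g x) ∂μ := by
  set m := ∫ x, g x ∂μ with hm
  have h1 : ∀ x, Real.exp m * (1 + (g x - m)) ≤ Real.exp (g x) := by
    intro x
    have h2 := Real.add_one_le_exp (g x - m)
    calc Real.exp m * (1 + (g x - m)) ≤ Real.exp m * Real.exp (g x - m) := by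
          exact mul_le_mul_of_nonneg_left (by linarith) (Real.exp_pos m).le
      _ = Real.exp (g x) := by rw [← Real.exp_add]; ring_nf
  have hint : Integrable (fun x => Real.exp m * (1 + (g x - m))) μ :=
    (((integrable_const (1:ℝ)).add (hg.sub (integrable_const m))).const_mul _)
  have h3 := integral_mono hint heg h1
  calc Real.exp m = Real.exp m * (1 + (m - m)) := by ring
    _ = ∫ x, Real.exp m * (1 + (g x - m)) ∂μ := by
        have e1 : ∫ a, (1 + (g a - m)) ∂μ = (∫ _a, (1:ℝ) ∂μ) + ∫ a, (g a - m) ∂μ :=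
          integral_add (integrable_const 1) (hg.sub (integrable_const m))
        have e2 : ∫ a, (g a - m) ∂μ = (∫ a, g a ∂μ) - ∫ _a, (m:ℝ) ∂μ :=
          integral_sub hg (integrable_const m)
        rw [integral_const_mul, e1, e2, integral_const, integral_const]
        simp [← hm]
    _ ≤ _ := h3

lemma bogo_aux {α : Type*} [MeasurableSpace α] (μ : Measure α) [SFinite μ] [NeZero μ]
    (f g : α → ℝ) (hmf : Measurable f) (hmg : Measurable g)
    (hef : Integrable (fun x => Real.exp (f x)) μ)
    (heg : Integrable (fun x => Real.exp (g x)) μ)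
    (hI : Integrable (fun x => (g x - f x) * Real.exp (f x)) μ) :
    (∫ x, Real.exp (f x) ∂μ)⁻¹ * ∫ x, (g x - f x) * Real.exp (f x) ∂μ ≤
      Real.log (∫ x, Real.exp (g x) ∂μ) - Real.log (∫ x, Real.exp (f x) ∂μ) := by
  set Qf := ∫ x, Real.exp (f x) ∂μ with hQf
  set Qg := ∫ x, Real.exp (g x) ∂μ with hQg
  have hQfpos : 0 < Qf := integral_exp_pos hef
  have hQgpos : 0 < Qg := integral_exp_pos heg
  set μ' := μ.tilted f with hμ'
  have hprob : IsProbabilityMeasure μ' := isProbabilityMeasure_tilted hef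
  -- density description of μ'
  have hdens : μ' = μ.withDensity (fun x => ENNReal.ofReal (Real.exp (f x) / Qf)) := rfl
  have hmd : Measurable (fun x => ENNReal.ofReal (Real.exp (f x) / Qf)) :=
    ((hmf.exp.div_const Qf)).ennreal_ofReal
  have hlt : ∀ᵐ x ∂μ, (ENNReal.ofReal (Real.exp (f x) / Qf)) < ∞ :=
    ae_of_all _ fun x => ENNReal.ofReal_lt_top
  have htoReal : ∀ x, ((ENNReal.ofReal (Real.exp (f x) / Qf)).toReal) = Real.exp (f x) / Qf := by
    intro x
    exact ENNReal.toReal_ofReal (div_nonneg (Real.exp_pos _).le hQfpos.le)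
  -- integrability of h := g - f w.r.t. μ'
  have hInth : Integrable (fun x => g x - f x) μ' := by
    rw [hdens, integrable_withDensity_iff hmd hlt]
    have : (fun x => (g x - f x) * ((ENNReal.ofReal (Real.exp (f x) / Qf)).toReal))
        = fun x => ((g x - f x) * Real.exp (f x)) / Qf := by
      funext x; rw [htoReal x]; ring
    rw [this]
    exact hI.div_const Qf
  -- integrability of exp h w.r.t. μ'
  have hInteh : Integrable (fun x => Real.exp (g x - f x)) μ' := by
    rw [hdens, integrable_withDensity_iff hmd hlt]
    have : (fun x => Real.exp (g x - f x) * ((ENNReal.ofReal (Real.exp (f x) / Qf)).toReal))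
        = fun x => Real.exp (g x) / Qf := by
      funext x; rw [htoReal x, Real.exp_sub]
      field_simp
    rw [this]
    exact heg.div_const Qf
  -- mean value
  have hmean : ∫ x, (g x - f x) ∂μ' = Qf⁻¹ * ∫ x, (g x - f x) * Real.exp (f x) ∂μ := by
    rw [hμ', integral_tilted]
    simp_rw [smul_eq_mul, ← hQf]
    rw [← integral_const_mul]
    congr 1; funext x; ring
  -- value of ∫ exp h dμ'
  have hval : ∫ x, Real.exp (g x - f x) ∂μ' = Qg / Qf := by
    have : (fun x => Real.exp (g x - f x)) = fun x => Real.exp ((g - f) x) := rfl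
    rw [hμ', this, integral_exp_tilted]
    congr 1
    · rw [hQg]; congr 1; funext x; simp
  have hjensen := my_exp_integral_le μ' hInth hInteh
  rw [hmean, hval] at hjensen
  have := Real.log_le_log (Real.exp_pos _) hjensen
  rw [Real.log_exp, Real.log_div hQgpos.ne' hQfpos.ne'] at this
  exact this


/-- Bogolyubov's inequality. If `Q_i = ∫ e^{-H_i/T} dΛ < ∞` and
`⟨F⟩_i = Q_i⁻¹ ∫ F e^{-H_i/T} dΛ`, then
`⟨H₁ - H₂⟩₁ ≤ T log Q₂ - T log Q₁ ≤ ⟨H₁ - H₂⟩₂`. -/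
theorem stmt5 (n : ℕ) (T : ℝ) (hT : 0 < T) (H₁ H₂ : (Fin n → ℝ) → ℝ)
    (hm₁ : Measurable H₁) (hm₂ : Measurable H₂)
    (hQ₁ : Integrable (fun Λ : Fin n → ℝ => Real.exp (-H₁ Λ / T)))
    (hQ₂ : Integrable (fun Λ : Fin n → ℝ => Real.exp (-H₂ Λ / T)))
    (hI₁ : Integrable (fun Λ : Fin n → ℝ => (H₁ Λ - H₂ Λ) * Real.exp (-H₁ Λ / T)))
    (hI₂ : Integrable (fun Λ : Fin n → ℝ => (H₁ Λ - H₂ Λ) * Real.exp (-H₂ Λ / T))) :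
    (∫ Λ : Fin n → ℝ, Real.exp (-H₁ Λ / T))⁻¹ *
        (∫ Λ : Fin n → ℝ, (H₁ Λ - H₂ Λ) * Real.exp (-H₁ Λ / T)) ≤
      T * Real.log (∫ Λ : Fin n → ℝ, Real.exp (-H₂ Λ / T)) -
        T * Real.log (∫ Λ : Fin n → ℝ, Real.exp (-H₁ Λ / T)) ∧
    T * Real.log (∫ Λ : Fin n → ℝ, Real.exp (-H₂ Λ / T)) -
        T * Real.log (∫ Λ : Fin n → ℝ, Real.exp (-H₁ Λ / T)) ≤
      (∫ Λ : Fin n → ℝ, Real.exp (-H₂ Λ / T))⁻¹ *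
        (∫ Λ : Fin n → ℝ, (H₁ Λ - H₂ Λ) * Real.exp (-H₂ Λ / T)) := by
  have hmf₁ : Measurable (fun Λ : Fin n → ℝ => -H₁ Λ / T) := hm₁.neg.div_const T
  have hmf₂ : Measurable (fun Λ : Fin n → ℝ => -H₂ Λ / T) := hm₂.neg.div_const T
  haveI : NeZero (volume : Measure (Fin n → ℝ)) := inferInstance
  have heq₁ : (fun Λ : Fin n → ℝ => (-H₂ Λ / T - -H₁ Λ / T) * Real.exp (-H₁ Λ / T))
      = fun Λ => T⁻¹ * ((H₁ Λ - H₂ Λ) * Real.exp (-H₁ Λ / T)) := by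
    funext Λ; ring
  have heq₂ : (fun Λ : Fin n → ℝ => (-H₁ Λ / T - -H₂ Λ / T) * Real.exp (-H₂ Λ / T))
      = fun Λ => -T⁻¹ * ((H₁ Λ - H₂ Λ) * Real.exp (-H₂ Λ / T)) := by
    funext Λ; ring
  have h1 := bogo_aux volume (fun Λ => -H₁ Λ / T) (fun Λ => -H₂ Λ / T) hmf₁ hmf₂ hQ₁ hQ₂
    (by rw [heq₁]; exact hI₁.const_mul T⁻¹)
  have h2 := bogo_aux volume (fun Λ => -H₂ Λ / T) (fun Λ => -H₁ Λ / T) hmf₂ hmf₁ hQ₂ hQ₁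
    (by rw [heq₂]; exact hI₂.const_mul (-T⁻¹))
  rw [heq₁, integral_const_mul] at h1
  rw [heq₂, integral_const_mul] at h2
  set Q₁ := ∫ Λ : Fin n → ℝ, Real.exp (-H₁ Λ / T)
  set Q₂ := ∫ Λ : Fin n → ℝ, Real.exp (-H₂ Λ / T)
  set I₁ := ∫ Λ : Fin n → ℝ, (H₁ Λ - H₂ Λ) * Real.exp (-H₁ Λ / T)
  set I₂ := ∫ Λ : Fin n → ℝ, (H₁ Λ - H₂ Λ) * Real.exp (-H₂ Λ / T)
  have hT' : T ≠ 0 := hT.ne'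
  constructor
  · have h3 := mul_le_mul_of_nonneg_left h1 hT.le
    have h4 : T * (Q₁⁻¹ * (T⁻¹ * I₁)) = Q₁⁻¹ * I₁ := by
      field_simp
    linarith [h3, h4.symm.le]
  · have h3 := mul_le_mul_of_nonneg_left h2 hT.le
    have h4 : T * (Q₂⁻¹ * (-T⁻¹ * I₂)) = -(Q₂⁻¹ * I₂) := by
      field_simp
    nlinarith [h3, h4]
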